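/- Hadamard's card shuffling convergence: let G be a finite group and ν a probability measure on G whose support generates G and which is not supported on a coset of a proper normal subgroup (e.g. ν(g) > 0 for all g ∈ G). If ν(g) > 0 for all g, then the k-fold convolution ν^{*k} converges to the uniform distribution on G as k → ∞. -/

import Mathlib

open Filter Finset

/-- Convolution of two functions on a finite group. -/
def groupConv {G : Type*} [Group G] [Fintype G] (μ ν : G → ℝ) : G → ℝ :=
  fun g => ∑ h, μ h * ν (h⁻¹ * g)

/-- k-fold convolution power, with the 0-th power the point mass at the identity. -/
def groupConvPow {G : Type*} [Group G] [Fintype G] [DecidableEq G] (ν : G → ℝ) : ℕ → G → ℝ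
  | 0 => fun g => if g = 1 then 1 else 0
  | k + 1 => groupConv (groupConvPow ν k) ν

set_option linter.unusedSectionVars false
section Aux

variable {G : Type*} [Group G] [Fintype G] [DecidableEq G]

lemma aux_sum_translate (ν : G → ℝ) (h : G) : ∑ g, ν (h⁻¹ * g) = ∑ g, ν g :=
  Fintype.sum_equiv (Equiv.mulLeft h⁻¹) _ _ (fun _ => rfl)

lemma aux_sum_translate' (ν : G → ℝ) (g : G) : ∑ h, ν (h⁻¹ * g) = ∑ x, ν x :=
  Fintype.sum_equiv ((Equiv.inv G).trans (Equiv.mulRight g)) _ _ (fun _ => rfl)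

lemma aux_sum_convPow (ν : G → ℝ) (hsum : ∑ g, ν g = 1) :
    ∀ k, ∑ g, groupConvPow ν k g = 1
  | 0 => by simp [groupConvPow]
  | (k+1) => by
    simp only [groupConvPow, groupConv]
    rw [Finset.sum_comm]
    calc ∑ h, ∑ g, groupConvPow ν k h * ν (h⁻¹ * g)
        = ∑ h, groupConvPow ν k h * ∑ g, ν (h⁻¹ * g) := by
          simp [Finset.mul_sum]
      _ = ∑ h, groupConvPow ν k h := by simp [aux_sum_translate, hsum]
      _ = 1 := aux_sum_convPow ν hsum k

end Aux

/-- Hadamard's card-shuffling convergence: the convolution powers of a strictly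
positive probability distribution on a finite group converge to the uniform one. -/
theorem convolution_powers_tendsto_uniform {G : Type*} [Group G] [Fintype G] [DecidableEq G]
    (ν : G → ℝ) (hpos : ∀ g, 0 < ν g) (hsum : ∑ g, ν g = 1) :
    ∀ g : G, Tendsto (fun k => groupConvPow ν k g) atTop
      (nhds (1 / (Fintype.card G : ℝ))) := by
  have hne : (univ : Finset G).Nonempty := ⟨1, mem_univ 1⟩
  set M : ℕ → ℝ := fun k => univ.sup' hne (groupConvPow ν k) with hMdef
  set m : ℕ → ℝ := fun k => univ.inf' hne (groupConvPow ν k) with hmdef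
  set ε : ℝ := univ.inf' hne ν with hεdef
  have hε : 0 < ε := by
    rw [hεdef, Finset.lt_inf'_iff]; exact fun b _ => hpos b
  have hε1 : ε ≤ 1 := by
    have h1 : ε ≤ ν 1 := Finset.inf'_le _ (mem_univ 1)
    have h2 : ν 1 ≤ ∑ g, ν g := Finset.single_le_sum (fun g _ => (hpos g).le) (mem_univ 1)
    linarith [hsum ▸ h2]
  have hle : ∀ k (g : G), m k ≤ groupConvPow ν k g ∧ groupConvPow ν k g ≤ M k := fun k g =>
    ⟨Finset.inf'_le _ (mem_univ g), Finset.le_sup' _ (mem_univ g)⟩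
  have hmM : ∀ k, m k ≤ M k := fun k => le_trans (hle k 1).1 (hle k 1).2
  -- upper bound for one step
  have step_ub : ∀ k (g : G), groupConvPow ν (k+1) g ≤ M k - ε * (M k - m k) := by
    intro k g
    obtain ⟨h₀, -, hh₀⟩ := Finset.exists_mem_eq_inf' hne (groupConvPow ν k)
    have hw0 : ∀ h : G, 0 < ν (h⁻¹ * g) := fun h => hpos _
    have hwsum : ∑ h, ν (h⁻¹ * g) = 1 := by rw [aux_sum_translate' ν g, hsum]
    have hεw : ε ≤ ν (h₀⁻¹ * g) := Finset.inf'_le _ (mem_univ _)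
    have herase : ∑ h ∈ univ.erase h₀, ν (h⁻¹ * g) = 1 - ν (h₀⁻¹ * g) := by
      rw [Finset.sum_erase_eq_sub (mem_univ h₀), hwsum]
    have key : groupConvPow ν (k+1) g
        = groupConvPow ν k h₀ * ν (h₀⁻¹ * g)
          + ∑ h ∈ univ.erase h₀, groupConvPow ν k h * ν (h⁻¹ * g) := by
      show groupConv (groupConvPow ν k) ν g = _
      rw [groupConv, ← Finset.add_sum_erase univ _ (mem_univ h₀)]
    have hsum_le : ∑ h ∈ univ.erase h₀, groupConvPow ν k h * ν (h⁻¹ * g)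
        ≤ ∑ h ∈ univ.erase h₀, M k * ν (h⁻¹ * g) := by
      apply Finset.sum_le_sum
      intro h _
      exact mul_le_mul_of_nonneg_right (hle k h).2 (hw0 h).le
    rw [key, ← hh₀]
    rw [← Finset.mul_sum, herase] at hsum_le
    nlinarith [hmM k, (hw0 h₀).le, hεw]
  -- lower bound for one step
  have step_lb : ∀ k (g : G), m k ≤ groupConvPow ν (k+1) g := by
    intro k g
    have hwsum : ∑ h, ν (h⁻¹ * g) = 1 := by rw [aux_sum_translate' ν g, hsum]
    have : m k * 1 ≤ ∑ h, groupConvPow ν k h * ν (h⁻¹ * g) := by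
      rw [← hwsum, Finset.mul_sum]
      apply Finset.sum_le_sum
      intro h _
      exact mul_le_mul_of_nonneg_right (hle k h).1 (hpos _).le
    simpa [groupConvPow, groupConv] using this
  have hM : ∀ k, M (k+1) ≤ M k - ε * (M k - m k) :=
    fun k => Finset.sup'_le hne _ (fun g _ => step_ub k g)
  have hm : ∀ k, m k ≤ m (k+1) :=
    fun k => Finset.le_inf' hne _ (fun g _ => step_lb k g)
  have hD : ∀ k, M (k+1) - m (k+1) ≤ (1-ε) * (M k - m k) := by
    intro k
    have h1 := hM k
    have h2 := hm k
    nlinarith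
  have hDk : ∀ k, M k - m k ≤ (M 0 - m 0) * (1-ε)^k := by
    intro k
    induction k with
    | zero => simp
    | succ n ih =>
      calc M (n+1) - m (n+1) ≤ (1-ε) * (M n - m n) := hD n
        _ ≤ (1-ε) * ((M 0 - m 0) * (1-ε)^n) := by
            apply mul_le_mul_of_nonneg_left ih (by linarith)
        _ = (M 0 - m 0) * (1-ε)^(n+1) := by ring
  have hc : (0:ℝ) < (Fintype.card G : ℝ) := by
    exact_mod_cast Fintype.card_pos
  have hunif : ∀ k, m k ≤ 1 / (Fintype.card G : ℝ) ∧ 1 / (Fintype.card G : ℝ) ≤ M k := by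
    intro k
    have hs := aux_sum_convPow ν hsum k
    have h1 : (1:ℝ) ≤ (Fintype.card G : ℝ) * M k := by
      rw [← hs]
      calc ∑ g, groupConvPow ν k g ≤ ∑ _g : G, M k :=
            Finset.sum_le_sum (fun g _ => (hle k g).2)
        _ = (Fintype.card G : ℝ) * M k := by
            rw [Finset.sum_const, card_univ]; simp [nsmul_eq_mul]
    have h2 : (Fintype.card G : ℝ) * m k ≤ 1 := by
      rw [← hs]
      calc (Fintype.card G : ℝ) * m k = ∑ _g : G, m k := by
            rw [Finset.sum_const, card_univ]; simp [nsmul_eq_mul]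
        _ ≤ ∑ g, groupConvPow ν k g := Finset.sum_le_sum (fun g _ => (hle k g).1)
    constructor
    · rw [le_div_iff₀ hc]; linarith
    · rw [div_le_iff₀ hc]; linarith
  have hbound : ∀ k (g : G), |groupConvPow ν k g - 1 / (Fintype.card G : ℝ)| ≤ M k - m k := by
    intro k g
    have h1 := (hle k g).1
    have h2 := (hle k g).2
    have h3 := (hunif k).1
    have h4 := (hunif k).2
    rw [abs_le]
    constructor <;> linarith
  intro g
  have hgeo : Tendsto (fun k => (M 0 - m 0) * (1-ε)^k) atTop (nhds 0) := by
    have h := tendsto_pow_atTop_nhds_zero_of_lt_one (by linarith : (0:ℝ) ≤ 1-ε)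
      (by linarith : (1:ℝ)-ε < 1)
    simpa using h.const_mul (M 0 - m 0)
  have h0 : Tendsto (fun k => groupConvPow ν k g - 1 / (Fintype.card G : ℝ)) atTop (nhds 0) := by
    apply squeeze_zero_norm _ hgeo
    intro k
    simpa [Real.norm_eq_abs] using (hbound k g).trans (hDk k)
  have := h0.add_const (1 / (Fintype.card G : ℝ))
  simpa using this
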